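/- arXiv:1908.03045 — 2 statements merged into one kernel-verified Lean document; each statement's English description precedes it below -/
import Mathlib

section
/- A finite point set 𝒱 ⊆ {0,1,…,k−1}^n is extremal if and only if the iterated downshift D_{π(n), π(n−1), …, π(1)}(𝒱) is the same set for every permutation π of [n]. -/
open MvPolynomial

/-- Monomials of `𝔽[x_1,…,x_n]` identified with their exponent vectors. -/
abbrev Mon (n : ℕ) := Fin n →₀ ℕ

/-- A linear order on monomials is a term order if `1` (i.e. the zero exponent
vector) is minimal and the order is compatible with multiplication by monomials. -/
def IsTermOrder {n : ℕ} (lin : LinearOrder (Mon n)) : Prop :=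
  (∀ u : Mon n, lin.le 0 u) ∧
    ∀ u v w : Mon n, lin.le u v → lin.le (u + w) (v + w)

/-- The strict lexicographic comparison of exponent vectors induced by the variable
ordering `x_{σ 0} ≻ x_{σ 1} ≻ ⋯ ≻ x_{σ (n-1)}`. -/
def lexLt {n : ℕ} (σ : Equiv.Perm (Fin n)) (u v : Mon n) : Prop :=
  ∃ j : Fin n, u (σ j) < v (σ j) ∧ ∀ i : Fin n, i < j → u (σ i) = v (σ i)

/-- `lin` is the lexicographic term order induced by the variable ordering
`x_{σ 0} ≻ x_{σ 1} ≻ ⋯ ≻ x_{σ (n-1)}`. -/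
def IsLexOrder {n : ℕ} (σ : Equiv.Perm (Fin n)) (lin : LinearOrder (Mon n)) : Prop :=
  ∀ u v : Mon n, lin.lt u v ↔ lexLt σ u v

/-- `m` is the leading monomial of `f` with respect to the monomial order `lin`. -/
def IsLeadMon {n : ℕ} {F : Type*} [CommSemiring F] (lin : LinearOrder (Mon n))
    (f : MvPolynomial (Fin n) F) (m : Mon n) : Prop :=
  m ∈ f.support ∧ ∀ m' ∈ f.support, lin.le m' m

/-- The set of standard monomials of an ideal `I` with respect to the monomial
order `lin`: monomials that are not the leading monomial of any nonzero `f ∈ I`. -/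
def stdMon {n : ℕ} {F : Type*} [CommSemiring F] (lin : LinearOrder (Mon n))
    (I : Ideal (MvPolynomial (Fin n) F)) : Set (Mon n) :=
  { m | ¬ ∃ f ∈ I, f ≠ 0 ∧ IsLeadMon lin f m }

/-- The vanishing ideal of a point set `V ⊆ F^n`. -/
def vanishIdeal {n : ℕ} {F : Type*} [CommRing F] (V : Set (Fin n → F)) :
    Ideal (MvPolynomial (Fin n) F) where
  carrier := { f | ∀ v ∈ V, MvPolynomial.eval v f = 0 }
  add_mem' := by
    intro a b ha hb v hv
    simp [map_add, ha v hv, hb v hv]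
  zero_mem' := by intro v hv; simp
  smul_mem' := by
    intro c f hf v hv
    simp [smul_eq_mul, hf v hv]

/-- A finite point set (in `{0,…,k-1}^n`, over any field) is extremal if its vanishing
ideal has the same standard monomials for every lexicographic term order. -/
def IsExtremal {n : ℕ} {F : Type*} [CommRing F] (V : Set (Fin n → F)) : Prop :=
  ∀ (σ₁ σ₂ : Equiv.Perm (Fin n)) (lin₁ lin₂ : LinearOrder (Mon n)),
    IsLexOrder σ₁ lin₁ → IsLexOrder σ₂ lin₂ →
      stdMon lin₁ (vanishIdeal V) = stdMon lin₂ (vanishIdeal V)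

/-- Embedding of a point of `{0,…,k-1}^n` into `F^n`. -/
def toField {n k : ℕ} (F : Type*) [Field F] (w : Fin n → Fin k) : Fin n → F :=
  fun i => ((w i : ℕ) : F)

/-- Identification of a point of `{0,…,k-1}^n` with an exponent vector in `ℕ^n`. -/
noncomputable def toExp {n k : ℕ} (w : Fin n → Fin k) : Mon n :=
  Finsupp.equivFunOnFinite.symm fun i => (w i : ℕ)

/-- The downshift `D_i(V)` of `V ⊆ {0,…,k-1}^n` at coordinate `i`: its `i`-section at
each choice of the other coordinates is `{0,1,…,m-1}` where `m` is the size of the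
corresponding `i`-section of `V`. -/
def downshift {n k : ℕ} (V : Finset (Fin n → Fin k)) (i : Fin n) :
    Finset (Fin n → Fin k) :=
  Finset.univ.filter fun w =>
    (w i : ℕ) < (Finset.univ.filter fun α : Fin k => Function.update w i α ∈ V).card

/-- The iterated downshift `D_{σ(n-1)}(D_{σ(n-2)}(⋯(D_{σ 0}(V))))`,
i.e. downshifts are applied at coordinates `σ 0, σ 1, …, σ (n-1)` in this order. -/
def iterDownshift {n k : ℕ} (σ : Equiv.Perm (Fin n)) (V : Finset (Fin n → Fin k)) :
    Finset (Fin n → Fin k) :=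
  (List.ofFn fun j : Fin n => σ j).foldl downshift V

/-- A polynomial is degree dominated (with dominating term `x^w`) if it equals
`x^w + Σ αᵢ x^{vᵢ}` where each `x^{vᵢ}` divides `x^w`. -/
def IsDegDominated {n : ℕ} {F : Type*} [CommSemiring F]
    (f : MvPolynomial (Fin n) F) : Prop :=
  ∃ w : Mon n, MvPolynomial.coeff w f = 1 ∧ ∀ v ∈ f.support, v ≤ w

/-- `G` is a Gröbner basis of `I` with respect to the monomial order `lin`:
`G ⊆ I` and for every nonzero `f ∈ I` some `g ∈ G` has leading monomial dividing
the leading monomial of `f` (divisibility of monomials being `≤` of exponents). -/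
def IsGroebner {n : ℕ} {F : Type*} [CommSemiring F] (lin : LinearOrder (Mon n))
    (G : Finset (MvPolynomial (Fin n) F)) (I : Ideal (MvPolynomial (Fin n) F)) : Prop :=
  (∀ g ∈ G, g ∈ I) ∧
    ∀ f ∈ I, f ≠ 0 → ∀ m : Mon n, IsLeadMon lin f m →
      ∃ g ∈ G, ∃ mg : Mon n, IsLeadMon lin g mg ∧ mg ≤ m

/-- `G` is a universal Gröbner basis of `I` if it is a Gröbner basis for every term order. -/
def IsUnivGroebner {n : ℕ} {F : Type*} [CommSemiring F]
    (G : Finset (MvPolynomial (Fin n) F)) (I : Ideal (MvPolynomial (Fin n) F)) : Prop :=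
  ∀ lin : LinearOrder (Mon n), IsTermOrder lin → IsGroebner lin G I

/-- A term order is an elimination order with respect to `x_i` if `x_i` is greater
than every monomial not involving `x_i`. -/
def IsElimOrder {n : ℕ} (lin : LinearOrder (Mon n)) (i : Fin n) : Prop :=
  IsTermOrder lin ∧ ∀ m : Mon n, m i = 0 → lin.lt m (Finsupp.single i 1)

/-- A set system `𝓕` shatters `S` if every subset of `S` is the intersection of `S`
with a member of `𝓕`. -/
def Shatters {n : ℕ} (𝓕 : Finset (Finset (Fin n))) (S : Finset (Fin n)) : Prop :=
  ∀ T ⊆ S, ∃ Fm ∈ 𝓕, Fm ∩ S = T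

open scoped Classical in
/-- The family `Sh(𝓕)` of sets shattered by `𝓕`. -/
noncomputable def shatteredFamily {n : ℕ} (𝓕 : Finset (Finset (Fin n))) :
    Finset (Finset (Fin n)) :=
  Finset.univ.filter fun S => Shatters 𝓕 S

/-- A set system is shattering-extremal if it shatters exactly `|𝓕|` sets. -/
def IsSExtremal {n : ℕ} (𝓕 : Finset (Finset (Fin n))) : Prop :=
  (shatteredFamily 𝓕).card = 𝓕.card

/-- The characteristic vector of a set, as a point of `F^n`. -/
def charVec {n : ℕ} (F : Type*) [Field F] (Fm : Finset (Fin n)) : Fin n → F :=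
  fun i => if i ∈ Fm then 1 else 0

/-- The squarefree monomial `∏_{i ∈ S} x_i` associated to a set `S ⊆ [n]`,
as an exponent vector. -/
noncomputable def setMon {n : ℕ} (S : Finset (Fin n)) : Mon n :=
  Finsupp.equivFunOnFinite.symm fun i => if i ∈ S then 1 else 0

/-- The polynomial `f_{S,H} = (∏_{i∈H} x_i) ⬝ ∏_{i∈S∖H} (x_i - 1)`. -/
noncomputable def fSH {n : ℕ} (F : Type*) [Field F] (S H : Finset (Fin n)) :
    MvPolynomial (Fin n) F :=
  (∏ i ∈ H, X i) * ∏ i ∈ S \ H, (X i - 1)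

/-- The downshift `D_i(𝓕)` of a set system. -/
def dshiftSet {n : ℕ} (𝓕 : Finset (Finset (Fin n))) (i : Fin n) :
    Finset (Finset (Fin n)) :=
  𝓕.image (fun Fm => Fm.erase i) ∪ 𝓕.filter fun Fm => i ∈ Fm ∧ Fm.erase i ∈ 𝓕

/-- The iterated downshift `D_{σ(n-1)}(⋯(D_{σ 0}(𝓕)))` of a set system:
downshifts are applied at `σ 0, σ 1, …, σ (n-1)` in this order. -/
def iterDshiftSet {n : ℕ} (σ : Equiv.Perm (Fin n)) (𝓕 : Finset (Finset (Fin n))) :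
    Finset (Finset (Fin n)) :=
  (List.ofFn fun j : Fin n => σ j).foldl dshiftSet 𝓕

/-- Restriction of an exponent vector in `ℕ^{n+1}` to its first `n` coordinates. -/
noncomputable def restrictMon {n : ℕ} (w : Mon (n + 1)) : Mon n :=
  Finsupp.equivFunOnFinite.symm fun i => w i.castSucc


/-! ### Auxiliary order lemmas -/

section OrderAux

variable {n : ℕ} {σ : Equiv.Perm (Fin n)} {lin : LinearOrder (Mon n)}

theorem lexLt_add {u v w : Mon n} (h : lexLt σ u v) : lexLt σ (u + w) (v + w) := by
  obtain ⟨j, hj, hij⟩ := h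
  exact ⟨j, by simpa using hj, fun i hi => by simpa using hij i hi⟩

theorem lexLt_of_add {u v w : Mon n} (h : lexLt σ (u + w) (v + w)) : lexLt σ u v := by
  obtain ⟨j, hj, hij⟩ := h
  refine ⟨j, by simpa using hj, fun i hi => ?_⟩
  have := hij i hi
  simpa using this

theorem lin_le_iff (u v : Mon n) : lin.le u v ↔ ¬ lin.lt v u := by
  rw [lin.lt_iff_le_not_ge]
  constructor
  · intro h hc
    exact hc.2 h
  · intro h
    rcases lin.le_total u v with h' | h'
    · exact h'
    · by_contra hc
      exact h ⟨h', hc⟩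

theorem IsLexOrder.lt_add (hl : IsLexOrder σ lin) {u v : Mon n} (w : Mon n)
    (h : lin.lt u v) : lin.lt (u + w) (v + w) := by
  rw [hl] at h ⊢; exact lexLt_add h

theorem IsLexOrder.le_add (hl : IsLexOrder σ lin) {u v : Mon n} (w : Mon n)
    (h : lin.le u v) : lin.le (u + w) (v + w) := by
  rw [lin_le_iff] at h ⊢
  intro hc
  rw [hl] at hc
  exact h ((hl v u).2 (lexLt_of_add hc))

theorem IsLexOrder.le_of_add (hl : IsLexOrder σ lin) {u v w : Mon n}
    (h : lin.le (u + w) (v + w)) : lin.le u v := by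
  rw [lin_le_iff] at h ⊢
  intro hc
  exact h (hl.lt_add w hc)

noncomputable instance lexPiLO (n : ℕ) : LinearOrder (Lex (Fin n → ℕ)) :=
  @Pi.Lex.linearOrder (Fin n) _ _ (Finite.to_wellFoundedLT) _

/-- Existence of a lex linear order for every permutation. -/
noncomputable def lexLO (σ : Equiv.Perm (Fin n)) : LinearOrder (Mon n) :=
  LinearOrder.lift' (β := Lex (Fin n → ℕ)) (fun m => toLex (fun j => m (σ j)))
    (fun u v h => by
      ext i
      have := congrFun (congrArg ofLex h) (σ.symm i)
      simpa using this)

theorem isLexOrder_lexLO (σ : Equiv.Perm (Fin n)) : IsLexOrder σ (lexLO σ) := by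
  intro u v
  show toLex (fun j => u (σ j)) < toLex (fun j => v (σ j)) ↔ _
  constructor
  · rintro ⟨j, hj, hjlt⟩
    exact ⟨j, hjlt, fun i hi => hj i hi⟩
  · rintro ⟨j, hjlt, hj⟩
    exact ⟨j, fun i hi => hj i hi, hjlt⟩

theorem lin_lt_of_le_of_ne {u v : Mon n} (h : lin.le u v) (hne : u ≠ v) : lin.lt u v :=
  (lin.lt_iff_le_not_ge u v).mpr ⟨h, fun h' => hne (lin.le_antisymm _ _ h h')⟩

theorem lin_lt_of_lt_of_le {u v w : Mon n} (h : lin.lt u v) (h' : lin.le v w) :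
    lin.lt u w := by
  obtain ⟨h1, h2⟩ := (lin.lt_iff_le_not_ge u v).mp h
  exact (lin.lt_iff_le_not_ge u w).mpr
    ⟨lin.le_trans _ _ _ h1 h', fun hc => h2 (lin.le_trans _ _ _ h' hc)⟩

theorem lin_not_lt_self (u : Mon n) : ¬ lin.lt u u := fun h =>
  ((lin.lt_iff_le_not_ge u u).mp h).2 (lin.le_refl u)

theorem lin_le_of_lt {u v : Mon n} (h : lin.lt u v) : lin.le u v :=
  ((lin.lt_iff_le_not_ge u v).mp h).1

/-- `0` is minimal for any lex order. -/
theorem IsLexOrder.zero_le (hl : IsLexOrder σ lin) (u : Mon n) : lin.le 0 u := by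
  rcases eq_or_ne u 0 with rfl | hne
  · exact lin.le_refl 0
  · refine lin_le_of_lt ((hl 0 u).2 ?_)
    have hex : ∃ j, u (σ j) ≠ 0 := by
      by_contra hc
      push_neg at hc
      apply hne
      ext i
      simpa using hc (σ.symm i)
    classical
    set S : Finset (Fin n) := Finset.univ.filter (fun j => u (σ j) ≠ 0) with hS
    have hSne : S.Nonempty := by
      obtain ⟨j, hj⟩ := hex
      exact ⟨j, by simp [hS, hj]⟩
    refine ⟨S.min' hSne, ?_, ?_⟩
    · have h2 := (Finset.mem_filter.mp (S.min'_mem hSne)).2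
      simpa using Nat.pos_of_ne_zero h2
    · intro i hi
      by_contra hc
      have hiS : i ∈ S := by
        rw [hS, Finset.mem_filter]
        refine ⟨Finset.mem_univ _, ?_⟩
        simpa using fun h => hc h.symm
      exact absurd (S.min'_le i hiS) (not_le.mpr hi)

end OrderAux



/-! ### Substitution and support utilities -/

section SubZero

variable {n : ℕ}

/-- Substitute `0` for all variables not in `L`. -/
noncomputable def subZero (L : List (Fin n)) (f : MvPolynomial (Fin n) ℚ) :
    MvPolynomial (Fin n) ℚ :=
  aeval (fun j => if j ∈ L then X j else 0) f

theorem subZero_monomial (L : List (Fin n)) (u : Mon n) (c : ℚ) :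
    subZero L (monomial u c) = if ∀ j, j ∉ L → u j = 0 then monomial u c else 0 := by
  classical
  rw [subZero, aeval_monomial]
  split_ifs with h
  · have hp : (u.prod fun i k => (if i ∈ L then X i else 0 : MvPolynomial (Fin n) ℚ) ^ k)
        = u.prod fun i k => (X i : MvPolynomial (Fin n) ℚ) ^ k := by
      apply Finsupp.prod_congr
      intro i hi
      rw [if_pos]
      by_contra hc
      exact (Finsupp.mem_support_iff.mp hi) (h i hc)
    rw [hp, MvPolynomial.algebraMap_eq]
    exact (monomial_eq).symm
  · push_neg at h
    obtain ⟨j, hjL, hj⟩ := h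
    have hz : (u.prod fun i k => (if i ∈ L then X i else 0 : MvPolynomial (Fin n) ℚ) ^ k) = 0 := by
      apply Finset.prod_eq_zero (Finsupp.mem_support_iff.mpr hj)
      show (if j ∈ L then X j else 0 : MvPolynomial (Fin n) ℚ) ^ (u j) = 0
      rw [if_neg hjL]
      exact zero_pow hj
    rw [hz, mul_zero]

theorem subZero_coeff (L : List (Fin n)) (f : MvPolynomial (Fin n) ℚ) (u : Mon n) :
    coeff u (subZero L f) = if ∀ j, j ∉ L → u j = 0 then coeff u f else 0 := by
  classical
  have hsum : subZero L f = ∑ v ∈ f.support, subZero L (monomial v (coeff v f)) := by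
    conv_lhs => rw [f.as_sum]
    exact map_sum (aeval _) _ _
  rw [hsum, MvPolynomial.coeff_sum]
  rw [Finset.sum_eq_single u]
  · rw [subZero_monomial]
    split_ifs with h
    · simp [coeff_monomial]
    · simp
  · intro v hv hvu
    rw [subZero_monomial]
    split_ifs
    · simp [coeff_monomial, hvu]
    · simp
  · intro hu
    rw [subZero_monomial]
    split_ifs
    · simp [coeff_monomial, MvPolynomial.notMem_support_iff.mp hu]
    · simp

theorem subZero_eval (L : List (Fin n)) (f : MvPolynomial (Fin n) ℚ) (p : Fin n → ℚ) :
    eval p (subZero L f) = eval (fun j => if j ∈ L then p j else 0) f := by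
  classical
  induction f using MvPolynomial.induction_on with
  | C c => simp [subZero]
  | add f g hf hg =>
      simp only [subZero, map_add] at hf hg ⊢
      rw [hf, hg]
  | mul_X q j hq =>
      simp only [subZero, map_mul, aeval_X] at hq ⊢
      rw [hq]
      congr 1
      split_ifs with h <;> simp [h]

theorem subZero_eval_of (L : List (Fin n)) (f : MvPolynomial (Fin n) ℚ) (p : Fin n → ℚ)
    (hp : ∀ j, j ∉ L → p j = 0) : eval p (subZero L f) = eval p f := by
  rw [subZero_eval]
  have he : (fun j => if j ∈ L then p j else 0) = p := by
    funext j
    split_ifs with h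
    · rfl
    · exact (hp j h).symm
  rw [he]

theorem eval_subZero_congr (L : List (Fin n)) (f : MvPolynomial (Fin n) ℚ)
    {p p' : Fin n → ℚ} (h : ∀ j ∈ L, p j = p' j) :
    eval p (subZero L f) = eval p' (subZero L f) := by
  rw [subZero_eval, subZero_eval]
  have he : (fun j => if j ∈ L then p j else 0) = (fun j => if j ∈ L then p' j else 0) := by
    funext j
    split_ifs with hj
    · exact h j hj
    · rfl
  rw [he]

/-- Interpolation: any function on a finite point set is realized by a polynomial. -/
theorem exists_interpolant (P : Finset (Fin n → ℚ)) (φ : (Fin n → ℚ) → ℚ) :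
    ∃ h : MvPolynomial (Fin n) ℚ, ∀ p ∈ P, eval p h = φ p := by
  classical
  induction P using Finset.induction_on with
  | empty => exact ⟨0, by simp⟩
  | @insert a s ha IH =>
      obtain ⟨h, hh⟩ := IH
      set g : (Fin n → ℚ) → MvPolynomial (Fin n) ℚ := fun q =>
        if hq : ∃ i, a i ≠ q i then
          C (a hq.choose - q hq.choose)⁻¹ * (X hq.choose - C (q hq.choose)) else 1 with hg
      have hga : ∀ q, q ≠ a → eval a (g q) = 1 := by
        intro q hqa
        have hq : ∃ i, a i ≠ q i := by
          by_contra hc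
          push_neg at hc
          exact hqa (funext fun i => (hc i).symm)
        rw [hg]
        simp only [dif_pos hq]
        rw [map_mul]
        simp only [eval_C, map_sub, eval_X]
        rw [inv_mul_cancel₀ (sub_ne_zero.mpr hq.choose_spec)]

      set N : MvPolynomial (Fin n) ℚ := ∏ q ∈ s, g q with hN
      have hNa : eval a N = 1 := by
        rw [hN, map_prod]
        apply Finset.prod_eq_one
        intro q hq
        exact hga q (fun hc => ha (hc ▸ hq))
      have hNq : ∀ q ∈ s, eval q N = 0 := by
        intro q hq
        have hqex : ∃ i, a i ≠ q i := by
          by_contra hc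
          push_neg at hc
          exact ha ((funext hc : a = q) ▸ hq)
        rw [hN, map_prod]
        apply Finset.prod_eq_zero hq
        rw [hg]
        simp only [dif_pos hqex]
        rw [map_mul]
        simp
      refine ⟨h + C (φ a - eval a h) * N, ?_⟩
      intro p hp
      rcases Finset.mem_insert.mp hp with rfl | hps
      · rw [map_add, map_mul, eval_C, hNa, mul_one]
        ring
      · rw [map_add, map_mul, eval_C, hNq p hps, mul_zero, add_zero]
        exact hh p hps

end SubZero

/-! ### Leading monomial of a product -/

section LeadMul

variable {n : ℕ} {σ : Equiv.Perm (Fin n)} {lin : LinearOrder (Mon n)}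

theorem isLeadMon_mul (hl : IsLexOrder σ lin) {p q : MvPolynomial (Fin n) ℚ} {a b : Mon n}
    (hp : IsLeadMon lin p a) (hq : IsLeadMon lin q b) :
    coeff (a + b) (p * q) = coeff a p * coeff b q ∧ IsLeadMon lin (p * q) (a + b) := by
  classical
  have key : coeff (a + b) (p * q) = coeff a p * coeff b q := by
    rw [coeff_mul]
    apply Finset.sum_eq_single ((a, b) : Mon n × Mon n)
    · rintro ⟨u, v⟩ huv hne
      rw [Finset.HasAntidiagonal.mem_antidiagonal] at huv
      by_contra hc
      have hu : coeff u p ≠ 0 := fun h => hc (by simp [h])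
      have hv : coeff v q ≠ 0 := fun h => hc (by simp [h])
      have hua : lin.le u a := hp.2 u (mem_support_iff.mpr hu)
      have hvb : lin.le v b := hq.2 v (mem_support_iff.mpr hv)
      have hlt : lin.lt (u + v) (a + b) := by
        rcases eq_or_ne u a with rfl | hune
        · have hvne : v ≠ b := fun h => hne (by rw [h])
          have h1 := hl.lt_add u (lin_lt_of_le_of_ne hvb hvne)
          rwa [add_comm v u, add_comm b u] at h1
        · have h1 := hl.lt_add v (lin_lt_of_le_of_ne hua hune)
          have h2 := hl.le_add a hvb
          rw [add_comm v a, add_comm b a] at h2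
          exact lin_lt_of_lt_of_le h1 h2
      rw [huv] at hlt
      exact lin_not_lt_self _ hlt
    · intro h
      exact (h (Finset.HasAntidiagonal.mem_antidiagonal.mpr rfl)).elim
  refine ⟨key, ⟨?_, ?_⟩⟩
  · rw [mem_support_iff, key]
    exact mul_ne_zero (mem_support_iff.mp hp.1) (mem_support_iff.mp hq.1)
  · intro m hm
    have hmem := MvPolynomial.support_mul p q hm
    rw [Finset.mem_add] at hmem
    obtain ⟨u, hu, v, hv, rfl⟩ := hmem
    have h1 := hl.le_add v (hp.2 u hu)
    have h2 := hl.le_add a (hq.2 v hv)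
    rw [add_comm v a, add_comm b a] at h2
    exact lin.le_trans _ _ _ h1 h2

end LeadMul


/-! ### Extraction of coefficients with respect to one variable -/

section CoeffAt

variable {n : ℕ}

open Polynomial in
/-- Specialization of a multivariate polynomial to a univariate polynomial in `x_i`,
with the other variables evaluated at `p`. -/
noncomputable def uniAt (i : Fin n) (p : Fin n → ℚ) (f : MvPolynomial (Fin n) ℚ) :
    Polynomial ℚ :=
  eval₂ Polynomial.C (fun j => if j = i then Polynomial.X else Polynomial.C (p j)) f

/-- The coefficient of `x_i^d` in `f`, as a polynomial in the remaining variables. -/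
noncomputable def coeffAt (i : Fin n) (d : ℕ) (f : MvPolynomial (Fin n) ℚ) :
    MvPolynomial (Fin n) ℚ := by
  classical
  exact ∑ u ∈ f.support.filter (fun u => u i = d), monomial (u.erase i) (coeff u f)

theorem uniAt_eval (i : Fin n) (p : Fin n → ℚ) (f : MvPolynomial (Fin n) ℚ) (t : ℚ) :
    (uniAt i p f).eval t = eval (Function.update p i t) f := by
  classical
  induction f using MvPolynomial.induction_on with
  | C c => simp [uniAt]
  | add f g hf hg =>
      simp only [uniAt, eval₂_add, Polynomial.eval_add, map_add] at hf hg ⊢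
      rw [hf, hg]
  | mul_X q j hq =>
      simp only [uniAt, eval₂_mul, eval₂_X, Polynomial.eval_mul, map_mul] at hq ⊢
      rw [hq]
      congr 1
      rcases eq_or_ne j i with rfl | hji
      · simp [Function.update_self]
      · simp [hji, Function.update_apply]

theorem uniAt_natDegree_le (i : Fin n) (p : Fin n → ℚ) (f : MvPolynomial (Fin n) ℚ)
    {d : ℕ} (h : ∀ u ∈ f.support, u i ≤ d) : (uniAt i p f).natDegree ≤ d := by
  classical
  rw [uniAt, eval₂_eq]
  apply Polynomial.natDegree_sum_le_of_forall_le
  intro u hu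
  apply le_trans (Polynomial.natDegree_C_mul_le _ _)
  apply le_trans (Polynomial.natDegree_prod_le _ _)
  have hb : ∀ j ∈ u.support,
      ((if j = i then Polynomial.X else Polynomial.C (p j)) ^ u j).natDegree
        = if j = i then u j else 0 := by
    intro j _
    rcases eq_or_ne j i with rfl | hji
    · simp [Polynomial.natDegree_X_pow]
    · simp [hji, Polynomial.natDegree_pow]
  rw [Finset.sum_congr rfl hb, Finset.sum_ite_eq' u.support i (fun j => u j)]
  split_ifs with hmem
  · exact h u hu
  · exact Nat.zero_le d

theorem prod_pow_eq (i : Fin n) (p : Fin n → ℚ) (u : Mon n) :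
    (∏ j ∈ u.support, (if j = i then Polynomial.X else Polynomial.C (p j)) ^ u j)
      = Polynomial.C (∏ j ∈ u.support.erase i, p j ^ u j) * Polynomial.X ^ (u i) := by
  classical
  by_cases hi : i ∈ u.support
  · rw [← Finset.mul_prod_erase _ _ hi, if_pos rfl, mul_comm]
    congr 1
    rw [map_prod]
    apply Finset.prod_congr rfl
    intro j hj
    rw [if_neg (Finset.ne_of_mem_erase hj), map_pow]
  · have hui : u i = 0 := Finsupp.notMem_support_iff.mp hi
    rw [hui, pow_zero, mul_one, Finset.erase_eq_of_notMem hi, map_prod]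
    apply Finset.prod_congr rfl
    intro j hj
    rw [if_neg, map_pow]
    rintro rfl
    exact hi hj

theorem uniAt_coeff (i : Fin n) (p : Fin n → ℚ) (f : MvPolynomial (Fin n) ℚ) (d : ℕ) :
    (uniAt i p f).coeff d = eval p (coeffAt i d f) := by
  classical
  rw [uniAt, eval₂_eq, coeffAt]
  rw [Polynomial.finset_sum_coeff]
  rw [map_sum]
  rw [Finset.sum_congr rfl (fun u _ => by
    rw [prod_pow_eq i p u, ← mul_assoc, ← map_mul, Polynomial.coeff_C_mul,
      Polynomial.coeff_X_pow])]
  have hstep : ∀ u ∈ f.support,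
      ((coeff u f * ∏ j ∈ u.support.erase i, p j ^ u j) * if d = u i then 1 else 0)
        = (if u i = d then coeff u f * ∏ j ∈ u.support.erase i, p j ^ u j else 0) := by
    intro u _
    rcases eq_or_ne (u i) d with h | h
    · rw [if_pos h.symm, if_pos h, mul_one]
    · rw [if_neg (Ne.symm h), if_neg h, mul_zero]
  rw [Finset.sum_congr rfl hstep, ← Finset.sum_filter]
  apply Finset.sum_congr rfl
  intro u hu
  rw [Finset.mem_filter] at hu
  rw [eval_monomial]
  congr 1
  rw [Finsupp.prod]
  rw [Finsupp.support_erase]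
  apply Finset.prod_congr rfl
  intro j hj
  rw [Finsupp.erase_ne (Finset.ne_of_mem_erase hj)]

theorem coeffAt_apply_i (i : Fin n) (d : ℕ) (f : MvPolynomial (Fin n) ℚ) :
    ∀ v ∈ (coeffAt i d f).support, v i = 0 := by
  classical
  intro v hv
  by_contra h
  apply mem_support_iff.mp hv
  rw [coeffAt, MvPolynomial.coeff_sum]
  apply Finset.sum_eq_zero
  intro u hu
  rw [coeff_monomial, if_neg]
  intro hc
  apply h
  rw [← hc, Finsupp.erase_same]

theorem coeffAt_coeff (i : Fin n) (d : ℕ) (f : MvPolynomial (Fin n) ℚ)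
    {v : Mon n} (hv : v i = 0) :
    coeff v (coeffAt i d f) = coeff (v + Finsupp.single i d) f := by
  classical
  have herase : (v + Finsupp.single i d).erase i = v := by
    ext j
    rcases eq_or_ne j i with rfl | hji
    · rw [Finsupp.erase_same, hv]
    · rw [Finsupp.erase_ne hji]
      simp [Finsupp.single_apply, Ne.symm hji]
  rw [coeffAt, MvPolynomial.coeff_sum, Finset.sum_eq_single (v + Finsupp.single i d)]
  · rw [herase, coeff_monomial, if_pos rfl]
  · intro u hu hne
    rw [Finset.mem_filter] at hu
    rw [coeff_monomial, if_neg]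
    intro hc
    apply hne
    ext j
    rcases eq_or_ne j i with rfl | hji
    · simp [hu.2, hv, Finsupp.single_apply]
    · have := congrArg (fun w : Mon n => w j) hc
      simp only [Finsupp.erase_ne hji] at this
      rw [this]
      simp [Finsupp.single_apply, Ne.symm hji]
  · intro hnm
    rw [herase, coeff_monomial, if_pos rfl]
    by_contra hc
    apply hnm
    rw [Finset.mem_filter]
    refine ⟨mem_support_iff.mpr hc, ?_⟩
    simp [hv, Finsupp.single_apply]

end CoeffAt


/-! ### Sections, layers and downshift combinatorics -/

section Comb

variable {n k : ℕ}

/-- The `i`-section of `V` through `w`. -/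
def secAt (i : Fin n) (V : Finset (Fin n → Fin k)) (w : Fin n → Fin k) : Finset (Fin k) :=
  Finset.univ.filter (fun α => Function.update w i α ∈ V)

/-- Zero out coordinate `i`. -/
def zeroAt (i : Fin n) (w : Fin n → Fin k) : Fin n → Fin k :=
  Function.update w i ⟨0, (w i).pos⟩

theorem zeroAt_apply_self (i : Fin n) (w : Fin n → Fin k) : (zeroAt i w i : ℕ) = 0 := by
  simp [zeroAt]

theorem zeroAt_apply_ne (i : Fin n) (w : Fin n → Fin k) {j : Fin n} (hj : j ≠ i) :
    zeroAt i w j = w j := by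
  simp [zeroAt, Function.update_apply, hj]

theorem update_zeroAt (i : Fin n) (w : Fin n → Fin k) :
    Function.update (zeroAt i w) i (w i) = w := by
  funext j
  rcases eq_or_ne j i with rfl | hj
  · rw [Function.update_self]
  · rw [Function.update_apply, if_neg hj, zeroAt_apply_ne i w hj]

theorem zeroAt_update (i : Fin n) (w : Fin n → Fin k) (α : Fin k) :
    zeroAt i (Function.update w i α) = zeroAt i w := by
  funext j
  rcases eq_or_ne j i with rfl | hj
  · simp [zeroAt]
  · rw [zeroAt_apply_ne i _ hj, zeroAt_apply_ne i w hj, Function.update_apply, if_neg hj]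

theorem secAt_update (i : Fin n) (V : Finset (Fin n → Fin k)) (w : Fin n → Fin k) (α : Fin k) :
    secAt i V (Function.update w i α) = secAt i V w := by
  unfold secAt
  apply Finset.filter_congr
  intro β _
  rw [Function.update_idem]

theorem secAt_zeroAt (i : Fin n) (V : Finset (Fin n → Fin k)) (w : Fin n → Fin k) :
    secAt i V (zeroAt i w) = secAt i V w :=
  secAt_update i V w _

theorem secAt_card_le (i : Fin n) (V : Finset (Fin n → Fin k)) (w : Fin n → Fin k) :
    (secAt i V w).card ≤ k := by
  calc (secAt i V w).card ≤ Fintype.card (Fin k) := Finset.card_le_univ _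
  _ = k := Fintype.card_fin k

theorem mem_downshift {V : Finset (Fin n → Fin k)} {i : Fin n} {w : Fin n → Fin k} :
    w ∈ downshift V i ↔ (w i : ℕ) < (secAt i V w).card := by
  simp [downshift, secAt]

/-- Points of `V` whose `i`-section has more than `d` elements, with coordinate `i`
zeroed out: the `d`-th layer of the downshift. -/
def layerW (i : Fin n) (V : Finset (Fin n → Fin k)) (d : ℕ) : Finset (Fin n → Fin k) :=
  (V.filter (fun w => d < (secAt i V w).card)).image (zeroAt i)

theorem mem_layerW {i : Fin n} {V : Finset (Fin n → Fin k)} {d : ℕ} {u : Fin n → Fin k} :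
    u ∈ layerW i V d ↔ (u i : ℕ) = 0 ∧ d < (secAt i V u).card := by
  classical
  unfold layerW
  rw [Finset.mem_image]
  constructor
  · rintro ⟨w, hw, rfl⟩
    rw [Finset.mem_filter] at hw
    exact ⟨zeroAt_apply_self i w, by rw [secAt_zeroAt]; exact hw.2⟩
  · rintro ⟨hu0, hcard⟩
    have hne : (secAt i V u).Nonempty :=
      Finset.card_pos.mp (lt_of_le_of_lt (Nat.zero_le d) hcard)
    obtain ⟨α, hα⟩ := hne
    rw [secAt, Finset.mem_filter] at hα
    refine ⟨Function.update u i α, ?_, ?_⟩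
    · rw [Finset.mem_filter, secAt_update]
      exact ⟨hα.2, hcard⟩
    · rw [zeroAt_update]
      funext j
      rcases eq_or_ne j i with rfl | hj
      · simp [zeroAt]
        exact (Fin.ext hu0).symm
      · exact zeroAt_apply_ne i u hj

/-- The downshift at `i` is glued from its layers. -/
theorem downshift_eq_glue (i : Fin n) (V : Finset (Fin n → Fin k)) :
    downshift V i = Finset.univ.filter (fun w => zeroAt i w ∈ layerW i V (w i : ℕ)) := by
  classical
  ext w
  rw [mem_downshift, Finset.mem_filter, mem_layerW, secAt_zeroAt]
  constructor
  · intro h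
    exact ⟨Finset.mem_univ _, zeroAt_apply_self i w, h⟩
  · rintro ⟨-, -, h⟩
    exact h

/-- Downshift in a direction `j ≠ i` acts layer by layer. -/
theorem downshift_glue_comm {i j : Fin n} (hji : j ≠ i)
    (A : ℕ → Finset (Fin n → Fin k)) :
    downshift (Finset.univ.filter (fun w => zeroAt i w ∈ A (w i : ℕ))) j
      = Finset.univ.filter (fun w => zeroAt i w ∈ downshift (A (w i : ℕ)) j) := by
  classical
  ext w
  have hzu : ∀ α : Fin k, zeroAt i (Function.update w j α)
      = Function.update (zeroAt i w) j α := by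
    intro α
    unfold zeroAt
    exact (Function.update_comm (Ne.symm hji) _ α w).symm
  have hsec : secAt j (Finset.univ.filter (fun w => zeroAt i w ∈ A (w i : ℕ))) w
      = secAt j (A (w i : ℕ)) (zeroAt i w) := by
    unfold secAt
    apply Finset.filter_congr
    intro α _
    rw [Finset.mem_filter]
    have h1 : (Function.update w j α) i = w i := by
      rw [Function.update_apply, if_neg (Ne.symm hji)]
    rw [hzu α, h1]
    simp
  rw [mem_downshift, Finset.mem_filter, mem_downshift, hsec]
  have h2 : (zeroAt i w) j = w j := zeroAt_apply_ne i w hji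
  rw [h2]
  simp

theorem foldl_downshift_glue {i : Fin n} (L : List (Fin n)) (hiL : i ∉ L)
    (A : ℕ → Finset (Fin n → Fin k)) :
    L.foldl downshift (Finset.univ.filter (fun w => zeroAt i w ∈ A (w i : ℕ)))
      = Finset.univ.filter (fun w => zeroAt i w ∈ L.foldl downshift (A (w i : ℕ))) := by
  classical
  induction L generalizing A with
  | nil => rfl
  | cons j L IH =>
      have hji : j ≠ i := fun h => hiL (h ▸ List.mem_cons_self)
      simp only [List.foldl_cons]
      rw [downshift_glue_comm hji A]
      exact IH (fun h => hiL (List.mem_cons_of_mem j h)) (fun d => downshift (A d) j)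

theorem downshift_pres {j : Fin n} {A : Finset (Fin n → Fin k)}
    (P : (Fin n → Fin k) → Prop)
    (hP : ∀ w α, P (Function.update w j α) ↔ P w) (hA : ∀ w ∈ A, P w) :
    ∀ w ∈ downshift A j, P w := by
  classical
  intro w hw
  rw [mem_downshift] at hw
  by_contra hc
  have hsec : secAt j A w = ∅ := by
    rw [Finset.eq_empty_iff_forall_notMem]
    intro α hα
    rw [secAt, Finset.mem_filter] at hα
    exact hc ((hP w α).mp (hA _ hα.2))
  rw [hsec] at hw
  simp at hw

theorem foldl_downshift_pres (L : List (Fin n)) {A : Finset (Fin n → Fin k)}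
    (P : (Fin n → Fin k) → Prop)
    (hP : ∀ j ∈ L, ∀ w α, P (Function.update w j α) ↔ P w) (hA : ∀ w ∈ A, P w) :
    ∀ w ∈ L.foldl downshift A, P w := by
  induction L generalizing A with
  | nil => exact hA
  | cons j L IH =>
      rw [List.foldl_cons]
      exact IH (fun l hl => hP l (List.mem_cons_of_mem j hl))
        (downshift_pres P (hP j (List.mem_cons_self)) hA)

theorem downshift_empty (j : Fin n) : downshift (∅ : Finset (Fin n → Fin k)) j = ∅ := by
  classical
  rw [Finset.eq_empty_iff_forall_notMem]
  intro w hw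
  rw [mem_downshift] at hw
  have : secAt j (∅ : Finset (Fin n → Fin k)) w = ∅ := by
    rw [Finset.eq_empty_iff_forall_notMem]
    intro α hα
    rw [secAt, Finset.mem_filter] at hα
    exact absurd hα.2 (Finset.notMem_empty _)
  rw [this] at hw
  simp at hw

theorem foldl_downshift_empty (L : List (Fin n)) :
    L.foldl downshift (∅ : Finset (Fin n → Fin k)) = ∅ := by
  induction L with
  | nil => rfl
  | cons j L IH => rw [List.foldl_cons, downshift_empty]; exact IH

end Comb

/-! ### `toExp` and `toField` basics -/

section Emb

variable {n k : ℕ}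

theorem toExp_apply (w : Fin n → Fin k) (j : Fin n) : toExp w j = (w j : ℕ) := by
  simp [toExp]

theorem toExp_injective : Function.Injective (toExp (n := n) (k := k)) := by
  intro w w' h
  funext j
  have := congrArg (fun m : Mon n => m j) h
  simp only [toExp_apply] at this
  exact Fin.ext this

theorem toField_injective : Function.Injective (toField (n := n) (k := k) ℚ) := by
  intro w w' h
  funext j
  have := congrFun h j
  simp only [toField] at this
  exact Fin.ext (Nat.cast_injective this)

theorem toField_apply (w : Fin n → Fin k) (j : Fin n) : toField ℚ w j = ((w j : ℕ) : ℚ) := rfl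

end Emb


/-! ### Recursion helpers -/

section RecHelp

variable {n k : ℕ}

theorem mem_vanishIdeal {S : Set (Fin n → ℚ)} {f : MvPolynomial (Fin n) ℚ} :
    f ∈ vanishIdeal S ↔ ∀ v ∈ S, eval v f = 0 := Iff.rfl

theorem mem_vanishIdeal_image {V : Finset (Fin n → Fin k)} {f : MvPolynomial (Fin n) ℚ} :
    f ∈ vanishIdeal ((V.image (toField ℚ) : Finset (Fin n → ℚ)) : Set (Fin n → ℚ))
      ↔ ∀ w ∈ V, eval (toField ℚ w) f = 0 := by
  rw [mem_vanishIdeal]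
  constructor
  · intro h w hw
    exact h _ (Finset.mem_coe.mpr (Finset.mem_image_of_mem _ hw))
  · intro h p hp
    rw [Finset.mem_coe, Finset.mem_image] at hp
    obtain ⟨w, hw, rfl⟩ := hp
    exact h w hw

theorem subZero_support_subset (L : List (Fin n)) (f : MvPolynomial (Fin n) ℚ) :
    (subZero L f).support ⊆ f.support := by
  intro u hu
  rw [mem_support_iff] at hu ⊢
  rw [subZero_coeff] at hu
  split_ifs at hu with h
  · exact hu
  · simp at hu

theorem subZero_support_zero (L : List (Fin n)) (f : MvPolynomial (Fin n) ℚ) :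
    ∀ u ∈ (subZero L f).support, ∀ j, j ∉ L → u j = 0 := by
  intro u hu
  rw [mem_support_iff, subZero_coeff] at hu
  split_ifs at hu with h
  · exact h
  · simp at hu

theorem lexLt_of_top {σ : Equiv.Perm (Fin n)} {i : Fin n} {L : List (Fin n)}
    (hsort : ∀ l ∈ L, σ.symm i < σ.symm l)
    {u v : Mon n} (hu : ∀ j, j ∉ i :: L → u j = 0) (hv : ∀ j, j ∉ i :: L → v j = 0)
    (hlt : u i < v i) : lexLt σ u v := by
  refine ⟨σ.symm i, ?_, ?_⟩
  · rwa [Equiv.apply_symm_apply]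
  · intro j' hj'
    have hnot : σ j' ∉ i :: L := by
      intro hmem
      rcases List.mem_cons.mp hmem with h | h
      · have h1 : j' = σ.symm i := by rw [← h, Equiv.symm_apply_apply]
        exact absurd (h1 ▸ hj') (lt_irrefl _)
      · have h2 := hsort _ h
        rw [Equiv.symm_apply_apply] at h2
        exact absurd (hj'.trans h2) (lt_irrefl _)
    rw [hu _ hnot, hv _ hnot]

theorem layerW_zero_outside {i : Fin n} {L : List (Fin n)} {V : Finset (Fin n → Fin k)}
    (hV : ∀ w ∈ V, ∀ j, j ∉ i :: L → (w j : ℕ) = 0) (d : ℕ) :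
    ∀ u ∈ layerW i V d, ∀ j, j ∉ L → (u j : ℕ) = 0 := by
  classical
  intro u hu j hj
  rw [layerW, Finset.mem_image] at hu
  obtain ⟨w, hw, rfl⟩ := hu
  rw [Finset.mem_filter] at hw
  rcases eq_or_ne j i with rfl | hji
  · exact zeroAt_apply_self j w
  · rw [zeroAt_apply_ne i w hji]
    apply hV w hw.1
    intro hmem
    rcases List.mem_cons.mp hmem with h | h
    · exact hji h
    · exact hj h

end RecHelp


/-! ### Step 1 of the recursion: pushing a leading monomial down to a layer -/

section Step1

variable {n k : ℕ}

theorem step1 {σ : Equiv.Perm (Fin n)} {lin : LinearOrder (Mon n)}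
    (hlin : IsLexOrder σ lin) {i : Fin n} {L : List (Fin n)}
    (hsort : ∀ l ∈ L, σ.symm i < σ.symm l)
    {V : Finset (Fin n → Fin k)} (hV : ∀ w ∈ V, ∀ j, j ∉ i :: L → (w j : ℕ) = 0)
    {m : Mon n} (hm : ∀ j, j ∉ i :: L → m j = 0)
    (hns : ∃ f ∈ vanishIdeal ((V.image (toField ℚ) : Finset (Fin n → ℚ)) : Set (Fin n → ℚ)),
      f ≠ 0 ∧ IsLeadMon lin f m) :
    ∃ g ∈ vanishIdeal (((layerW i V (m i)).image (toField ℚ) : Finset (Fin n → ℚ)) :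
        Set (Fin n → ℚ)), g ≠ 0 ∧ IsLeadMon lin g (m.erase i) := by
  classical
  obtain ⟨f, hfI, -, hflm⟩ := hns
  set f' := subZero (i :: L) f with hf'
  -- f' is in the vanishing ideal
  have hf'I : ∀ w ∈ V, eval (toField ℚ w) f' = 0 := by
    intro w hw
    rw [hf', subZero_eval_of]
    · exact mem_vanishIdeal_image.mp hfI w hw
    · intro j hj
      rw [toField_apply, hV w hw j hj, Nat.cast_zero]
  have hcm : coeff m f' = coeff m f := by
    rw [hf', subZero_coeff, if_pos hm]
  have hm_mem : m ∈ f'.support := by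
    rw [mem_support_iff, hcm]
    exact mem_support_iff.mp hflm.1
  have hf'lm : IsLeadMon lin f' m :=
    ⟨hm_mem, fun u hu => hflm.2 u (subZero_support_subset _ _ hu)⟩
  -- bounded degree in x_i
  have hdeg : ∀ u ∈ f'.support, u i ≤ m i := by
    intro u hu
    by_contra hc
    push_neg at hc
    have hlex : lexLt σ m u :=
      lexLt_of_top hsort hm (subZero_support_zero _ _ u hu) hc
    have h1 : lin.lt m u := (hlin m u).mpr hlex
    have h2 : lin.le u m := hf'lm.2 u hu
    exact lin_not_lt_self m (lin_lt_of_lt_of_le h1 h2)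
  -- the extracted coefficient polynomial
  refine ⟨coeffAt i (m i) f', ?_, ?_, ?_, ?_⟩
  · -- vanishing on the layer
    rw [mem_vanishIdeal_image]
    intro u hu
    rw [mem_layerW] at hu
    obtain ⟨hu0, hcard⟩ := hu
    set p := toField ℚ u with hp
    set A := uniAt i p f' with hA
    have hAdeg : A.natDegree ≤ m i := uniAt_natDegree_le i p f' hdeg
    have hAeval : ∀ α ∈ secAt i V u, A.eval ((α : ℕ) : ℚ) = 0 := by
      intro α hα
      rw [hA, uniAt_eval]
      have hupdate : Function.update p i ((α : ℕ) : ℚ) = toField ℚ (Function.update u i α) := by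
        funext j
        rcases eq_or_ne j i with rfl | hj
        · rw [Function.update_self, toField_apply, Function.update_self]
        · rw [Function.update_apply, if_neg hj, toField_apply, Function.update_apply,
            if_neg hj, hp, toField_apply]
      rw [hupdate]
      apply hf'I
      rw [secAt, Finset.mem_filter] at hα
      exact hα.2
    have hA0 : A = 0 := by
      apply Polynomial.eq_zero_of_natDegree_lt_card_of_eval_eq_zero' A
        ((secAt i V u).image (fun α : Fin k => ((α : ℕ) : ℚ)))
      · intro x hx
        rw [Finset.mem_image] at hx
        obtain ⟨α, hα, rfl⟩ := hx
        exact hAeval α hα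
      · rw [Finset.card_image_of_injective]
        · exact lt_of_le_of_lt hAdeg hcard
        · intro a b hab
          exact Fin.ext (Nat.cast_injective hab)
    have hcf := uniAt_coeff i p f' (m i)
    rw [← hcf, ← hA, hA0]
    simp
  · -- nonzero
    have h1 : coeff (m.erase i) (coeffAt i (m i) f') = coeff m f' := by
      rw [coeffAt_coeff i (m i) f' Finsupp.erase_same, Finsupp.erase_add_single]
    intro hzero
    exact mem_support_iff.mp hm_mem (by rw [← h1, hzero, coeff_zero])
  · -- membership of the leading monomial in the support
    rw [mem_support_iff, coeffAt_coeff i (m i) f' Finsupp.erase_same,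
      Finsupp.erase_add_single]
    exact mem_support_iff.mp hm_mem
  · -- maximality
    intro v hv
    have hv0 : v i = 0 := coeffAt_apply_i i (m i) f' v hv
    have hvm : v + Finsupp.single i (m i) ∈ f'.support := by
      rw [mem_support_iff, ← coeffAt_coeff i (m i) f' hv0]
      exact mem_support_iff.mp hv
    have hle := hf'lm.2 _ hvm
    have hle2 : lin.le (v + Finsupp.single i (m i)) (m.erase i + Finsupp.single i (m i)) := by
      rw [Finsupp.erase_add_single]
      exact hle
    exact hlin.le_of_add hle2

end Step1


/-! ### Step 2 of the recursion: lifting a leading monomial from a layer -/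

section Step2

variable {n k : ℕ}

theorem step2 {σ : Equiv.Perm (Fin n)} {lin : LinearOrder (Mon n)}
    (hlin : IsLexOrder σ lin) {i : Fin n} {L : List (Fin n)}
    (hsort : ∀ l ∈ L, σ.symm i < σ.symm l) (hiL : i ∉ L)
    {V : Finset (Fin n → Fin k)} (hV : ∀ w ∈ V, ∀ j, j ∉ i :: L → (w j : ℕ) = 0)
    {m : Mon n} (hm : ∀ j, j ∉ i :: L → m j = 0)
    (hns : ∃ g ∈ vanishIdeal (((layerW i V (m i)).image (toField ℚ) : Finset (Fin n → ℚ)) :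
        Set (Fin n → ℚ)), g ≠ 0 ∧ IsLeadMon lin g (m.erase i)) :
    ∃ f ∈ vanishIdeal ((V.image (toField ℚ) : Finset (Fin n → ℚ)) : Set (Fin n → ℚ)),
      f ≠ 0 ∧ IsLeadMon lin f m := by
  classical
  obtain ⟨g0, hg0I, -, hg0lm⟩ := hns
  set d := m i with hd
  set g := subZero L g0 with hg
  have hgI : ∀ u ∈ layerW i V d, eval (toField ℚ u) g = 0 := by
    intro u hu
    rw [hg, subZero_eval_of]
    · exact mem_vanishIdeal_image.mp hg0I u hu
    · intro j hj
      rw [toField_apply, layerW_zero_outside hV d u hu j hj, Nat.cast_zero]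
  have hmL : ∀ j, j ∉ L → (m.erase i) j = 0 := by
    intro j hj
    rcases eq_or_ne j i with rfl | hji
    · exact Finsupp.erase_same
    · rw [Finsupp.erase_ne hji]
      exact hm j (fun hc => (List.mem_cons.mp hc).elim (fun h => hji h) hj)
  have hgm : coeff (m.erase i) g = coeff (m.erase i) g0 := by
    rw [hg, subZero_coeff, if_pos hmL]
  have hgm_mem : (m.erase i) ∈ g.support := by
    rw [mem_support_iff, hgm]
    exact mem_support_iff.mp hg0lm.1
  have hglm : IsLeadMon lin g (m.erase i) :=
    ⟨hgm_mem, fun u hu => hg0lm.2 u (subZero_support_subset _ _ hu)⟩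
  -- the bad projections
  set B := (V.filter (fun w => (secAt i V w).card ≤ d)).image (zeroAt i) with hB
  have hBmem : ∀ u ∈ B, (u i : ℕ) = 0 ∧ (secAt i V u).card ≤ d ∧
      (∀ j, j ∉ L → (u j : ℕ) = 0) := by
    intro u hu
    rw [hB, Finset.mem_image] at hu
    obtain ⟨w, hw, rfl⟩ := hu
    rw [Finset.mem_filter] at hw
    refine ⟨zeroAt_apply_self i w, by rw [secAt_zeroAt]; exact hw.2, ?_⟩
    intro j hj
    rcases eq_or_ne j i with rfl | hji
    · exact zeroAt_apply_self j w
    · rw [zeroAt_apply_ne i w hji]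
      exact hV w hw.1 j (fun hc => (List.mem_cons.mp hc).elim (fun h => hji h) hj)
  -- the univariate polynomials whose coefficients we interpolate
  set r : (Fin n → Fin k) → Polynomial ℚ := fun u =>
    Polynomial.X ^ (d - (secAt i V u).card) *
      ∏ α ∈ secAt i V u, (Polynomial.X - Polynomial.C ((α : ℕ) : ℚ)) with hr
  have hrmonic : ∀ u, (r u).Monic := by
    intro u
    exact (Polynomial.monic_X_pow _).mul
      (Polynomial.monic_prod_of_monic _ _ (fun α _ => Polynomial.monic_X_sub_C _))
  have hrdeg : ∀ u, (secAt i V u).card ≤ d → (r u).natDegree = d := by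
    intro u hu
    rw [hr]
    rw [Polynomial.Monic.natDegree_mul (Polynomial.monic_X_pow _)
      (Polynomial.monic_prod_of_monic _ _ (fun α _ => Polynomial.monic_X_sub_C _))]
    rw [Polynomial.natDegree_X_pow, Polynomial.natDegree_prod_of_monic _ _
      (fun α _ => Polynomial.monic_X_sub_C _)]
    simp only [Polynomial.natDegree_X_sub_C, Finset.sum_const, smul_eq_mul, mul_one]
    omega
  have hqex : ∀ c : ℕ, ∃ q : MvPolynomial (Fin n) ℚ,
      ∀ u ∈ B, eval (toField ℚ u) q = (r u).coeff c := by
    intro c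
    obtain ⟨q, hq⟩ := exists_interpolant (B.image (toField ℚ))
      (fun p => if h : ∃ u ∈ B, toField ℚ u = p then (r h.choose).coeff c else 0)
    refine ⟨q, ?_⟩
    intro u hu
    rw [hq _ (Finset.mem_image_of_mem _ hu)]
    have hex : ∃ u' ∈ B, toField ℚ u' = toField ℚ u := ⟨u, hu, rfl⟩
    rw [dif_pos hex]
    congr 1
    exact congrArg r (toField_injective hex.choose_spec.2)
  choose qf hqf using hqex
  -- the monic polynomial of degree d in x_i vanishing on the bad part of V
  set q : MvPolynomial (Fin n) ℚ := monomial (Finsupp.single i d) 1 +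
    ∑ c ∈ Finset.range d, subZero L (qf c) * monomial (Finsupp.single i c) 1 with hq
  have hqtop : coeff (Finsupp.single i d) q = 1 := by
    rw [hq, coeff_add, coeff_monomial, if_pos rfl, MvPolynomial.coeff_sum]
    have hz : ∀ c ∈ Finset.range d,
        coeff (Finsupp.single i d) (subZero L (qf c) * monomial (Finsupp.single i c) 1)
          = 0 := by
      intro c hc
      rw [coeff_mul_monomial']
      split_ifs with hle
      · rw [mul_one]
        by_contra hne
        have hmem := mem_support_iff.mpr hne
        have h0 := subZero_support_zero L (qf c) _ hmem i hiL
        rw [Finsupp.tsub_apply, Finsupp.single_eq_same, Finsupp.single_eq_same] at h0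
        rw [Finset.mem_range] at hc
        omega
      · rfl
    rw [Finset.sum_eq_zero hz, add_zero]
  have hqlm : IsLeadMon lin q (Finsupp.single i d) := by
    refine ⟨mem_support_iff.mpr (by rw [hqtop]; exact one_ne_zero), ?_⟩
    intro v hv
    rcases eq_or_ne v (Finsupp.single i d) with rfl | hvne
    · exact lin.le_refl _
    · have hvs : coeff v q ≠ 0 := mem_support_iff.mp hv
      rw [hq, coeff_add, coeff_monomial, if_neg (fun h => hvne h.symm), zero_add,
        MvPolynomial.coeff_sum] at hvs
      obtain ⟨c, hc, hcne⟩ := Finset.exists_ne_zero_of_sum_ne_zero hvs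
      rw [coeff_mul_monomial'] at hcne
      have hle : Finsupp.single i c ≤ v := by
        by_contra hc2
        rw [if_neg hc2] at hcne
        exact hcne rfl
      rw [if_pos hle, mul_one] at hcne
      have hmem := mem_support_iff.mpr hcne
      have hzero := subZero_support_zero L (qf c) _ hmem
      have hvsplit : v = (v - Finsupp.single i c) + Finsupp.single i c :=
        (tsub_add_cancel_of_le hle).symm
      apply lin_le_of_lt
      apply (hlin _ _).mpr
      apply lexLt_of_top hsort (L := L)
      · intro j hj
        have hji : j ≠ i := fun h => hj (h ▸ List.mem_cons_self)
        have hjL : j ∉ L := fun h => hj (List.mem_cons_of_mem i h)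
        rw [hvsplit, Finsupp.add_apply, hzero j hjL, Finsupp.single_apply,
          if_neg (fun h => hji h.symm), add_zero]
      · intro j hj
        have hji : j ≠ i := fun h => hj (h ▸ List.mem_cons_self)
        rw [Finsupp.single_apply, if_neg (fun h => hji h.symm)]
      · have hvi : v i = c := by
          rw [hvsplit, Finsupp.add_apply, hzero i hiL, Finsupp.single_eq_same, zero_add]
        rw [hvi, Finsupp.single_eq_same]
        exact Finset.mem_range.mp hc
  -- evaluation of q at points of V with small section
  have hqeval : ∀ w ∈ V, (secAt i V w).card ≤ d → eval (toField ℚ w) q = 0 := by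
    intro w hw hsec
    have huB : zeroAt i w ∈ B := by
      rw [hB, Finset.mem_image]
      exact ⟨w, Finset.mem_filter.mpr ⟨hw, hsec⟩, rfl⟩
    have hevalmon : ∀ c : ℕ, eval (toField ℚ w) (monomial (Finsupp.single i c) (1 : ℚ))
        = ((w i : ℕ) : ℚ) ^ c := by
      intro c
      rw [eval_monomial, one_mul]
      exact Finsupp.prod_single_index (pow_zero _)
    have hevalsub : ∀ c, eval (toField ℚ w) (subZero L (qf c)) = (r (zeroAt i w)).coeff c := by
      intro c
      have hagree : ∀ j ∈ L, toField ℚ w j = toField ℚ (zeroAt i w) j := by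
        intro j hj
        have hji : j ≠ i := fun h => hiL (h ▸ hj)
        rw [toField_apply, toField_apply, zeroAt_apply_ne i w hji]
      rw [eval_subZero_congr L (qf c) hagree, subZero_eval_of]
      · exact hqf c _ huB
      · intro j hj
        rw [toField_apply, (hBmem _ huB).2.2 j hj, Nat.cast_zero]
    rw [hq, map_add, map_sum, hevalmon d]
    have hterm : ∀ c ∈ Finset.range d,
        eval (toField ℚ w) (subZero L (qf c) * monomial (Finsupp.single i c) 1)
          = (r (zeroAt i w)).coeff c * ((w i : ℕ) : ℚ) ^ c := by
      intro c _
      rw [map_mul, hevalsub c, hevalmon c]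
    rw [Finset.sum_congr rfl hterm]
    have hrn : (r (zeroAt i w)).natDegree = d :=
      hrdeg _ (by rw [secAt_zeroAt]; exact hsec)
    have hc1 : (r (zeroAt i w)).coeff d = 1 := by
      rw [← hrn]
      exact (hrmonic _).coeff_natDegree
    have hreval : (r (zeroAt i w)).eval ((w i : ℕ) : ℚ) =
        ((w i : ℕ) : ℚ) ^ d +
          ∑ c ∈ Finset.range d, (r (zeroAt i w)).coeff c * ((w i : ℕ) : ℚ) ^ c := by
      rw [Polynomial.eval_eq_sum_range, hrn, Finset.sum_range_succ, hc1, one_mul, add_comm]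
    rw [← hreval]
    have hwi : (w i) ∈ secAt i V (zeroAt i w) := by
      rw [secAt_zeroAt, secAt, Finset.mem_filter]
      exact ⟨Finset.mem_univ _, by rw [Function.update_eq_self]; exact hw⟩
    rw [hr]
    simp only
    rw [Polynomial.eval_mul, Polynomial.eval_prod]
    apply mul_eq_zero_of_right
    apply Finset.prod_eq_zero hwi
    rw [Polynomial.eval_sub, Polynomial.eval_X, Polynomial.eval_C, sub_self]
  -- evaluation of g at points of V with large section
  have hgeval : ∀ w ∈ V, d < (secAt i V w).card → eval (toField ℚ w) g = 0 := by
    intro w hw hsec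
    have hagree : ∀ j ∈ L, toField ℚ w j = toField ℚ (zeroAt i w) j := by
      intro j hj
      have hji : j ≠ i := fun h => hiL (h ▸ hj)
      rw [toField_apply, toField_apply, zeroAt_apply_ne i w hji]
    rw [hg, eval_subZero_congr L g0 hagree, ← hg]
    exact hgI _ (mem_layerW.mpr ⟨zeroAt_apply_self i w,
      by rw [secAt_zeroAt]; exact hsec⟩)
  obtain ⟨hcoeff, hlm⟩ := isLeadMon_mul hlin hqlm hglm
  have hmsplit : Finsupp.single i d + m.erase i = m := by
    rw [hd]
    exact Finsupp.single_add_erase i m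
  refine ⟨q * g, ?_, ?_, ?_⟩
  · rw [mem_vanishIdeal_image]
    intro w hw
    rw [map_mul]
    rcases le_or_gt (secAt i V w).card d with hle | hlt
    · rw [hqeval w hw hle, zero_mul]
    · rw [hgeval w hw hlt, mul_zero]
  · have hne : coeff (Finsupp.single i d + m.erase i) (q * g) ≠ 0 := by
      rw [hcoeff, hqtop, one_mul, hgm]
      exact mem_support_iff.mp hg0lm.1
    intro h0
    exact hne (by rw [h0, coeff_zero])
  · rw [← hmsplit]
    exact hlm

end Step2


/-! ### Gluing on the exponent side, and monomials outside the support -/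

section Glue

variable {n k : ℕ}

theorem glue_toExp {i : Fin n} {L : List (Fin n)} (hiL : i ∉ L)
    (V : Finset (Fin n → Fin k)) (m : Mon n) :
    m ∈ toExp '' (((i :: L).foldl downshift V : Finset (Fin n → Fin k)) :
        Set (Fin n → Fin k))
      ↔ m.erase i ∈ toExp ''
        ((L.foldl downshift (layerW i V (m i)) : Finset (Fin n → Fin k)) :
          Set (Fin n → Fin k)) := by
  classical
  have hfold : (i :: L).foldl downshift V
      = Finset.univ.filter
          (fun w => zeroAt i w ∈ L.foldl downshift (layerW i V (w i : ℕ))) := by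
    rw [List.foldl_cons, downshift_eq_glue i V, foldl_downshift_glue L hiL (layerW i V)]
  rw [hfold]
  constructor
  · rintro ⟨w, hw, rfl⟩
    rw [Finset.mem_coe, Finset.mem_filter] at hw
    refine ⟨zeroAt i w, ?_, ?_⟩
    · rw [Finset.mem_coe, toExp_apply]
      exact hw.2
    · ext j
      rcases eq_or_ne j i with rfl | hj
      · rw [toExp_apply, zeroAt_apply_self, Finsupp.erase_same]
      · rw [toExp_apply, zeroAt_apply_ne i w hj, Finsupp.erase_ne hj, toExp_apply]
  · rintro ⟨u, hu, hue⟩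
    rw [Finset.mem_coe] at hu
    have hlayer_ne : (layerW i V (m i)).Nonempty := by
      by_contra hc
      rw [Finset.not_nonempty_iff_eq_empty] at hc
      rw [hc, foldl_downshift_empty] at hu
      exact absurd hu (Finset.notMem_empty u)
    obtain ⟨u₀, hu₀⟩ := hlayer_ne
    have hmk : m i < k := lt_of_lt_of_le (mem_layerW.mp hu₀).2 (secAt_card_le i V u₀)
    have hui : (u i : ℕ) = 0 := by
      refine foldl_downshift_pres L (fun w => (w i : ℕ) = 0) ?_ ?_ u hu
      · intro j hj w α
        have hji : j ≠ i := fun h => hiL (h ▸ hj)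
        show ((Function.update w j α) i : ℕ) = 0 ↔ (w i : ℕ) = 0
        rw [Function.update_apply, if_neg (fun h : i = j => hji h.symm)]
      · intro w hw
        exact (mem_layerW.mp hw).1
    refine ⟨Function.update u i (⟨m i, hmk⟩ : Fin k), ?_, ?_⟩
    · rw [Finset.mem_coe, Finset.mem_filter]
      refine ⟨Finset.mem_univ _, ?_⟩
      have hwi : ((Function.update u i (⟨m i, hmk⟩ : Fin k)) i : ℕ) = m i := by
        rw [Function.update_self]
      have hzw : zeroAt i (Function.update u i (⟨m i, hmk⟩ : Fin k)) = u := by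
        funext j
        rcases eq_or_ne j i with rfl | hj
        · apply Fin.ext
          rw [zeroAt_apply_self, hui]
        · rw [zeroAt_apply_ne i _ hj, Function.update_apply, if_neg hj]
      rw [hwi, hzw]
      exact hu
    · ext j
      rcases eq_or_ne j i with rfl | hj
      · rw [toExp_apply, Function.update_self]
      · rw [toExp_apply, Function.update_apply, if_neg hj]
        have h1 := congrArg (fun mm : Mon n => mm j) hue
        simp only [toExp_apply] at h1
        rw [h1, Finsupp.erase_ne hj]

theorem not_std_of_zerocoord {lin : LinearOrder (Mon n)} {V : Finset (Fin n → Fin k)}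
    {m : Mon n} {j : Fin n} (hj : m j ≠ 0) (h0 : ∀ w ∈ V, (w j : ℕ) = 0) :
    ∃ f ∈ vanishIdeal ((V.image (toField ℚ) : Finset (Fin n → ℚ)) : Set (Fin n → ℚ)),
      f ≠ 0 ∧ IsLeadMon lin f m := by
  classical
  refine ⟨monomial m 1, ?_, ?_, ?_, ?_⟩
  · rw [mem_vanishIdeal_image]
    intro w hw
    rw [eval_monomial, one_mul, Finsupp.prod]
    apply Finset.prod_eq_zero (Finsupp.mem_support_iff.mpr hj)
    show toField ℚ w j ^ (m j) = 0
    rw [toField_apply, h0 w hw, Nat.cast_zero]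
    exact zero_pow hj
  · rw [Ne, MvPolynomial.monomial_eq_zero]
    exact one_ne_zero
  · rw [mem_support_iff, coeff_monomial, if_pos rfl]
    exact one_ne_zero
  · intro u hu
    have hmu : m = u := by
      by_contra hne
      exact (mem_support_iff.mp hu) (by rw [coeff_monomial, if_neg hne])
    rw [← hmu]
    exact lin.le_refl m

end Glue


/-! ### The main lemma: standard monomials of a lex order are iterated downshifts -/

section Main

variable {n k : ℕ}

theorem mainL (σ : Equiv.Perm (Fin n)) (lin : LinearOrder (Mon n))
    (hlin : IsLexOrder σ lin) (L : List (Fin n)) :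
    ∀ V : Finset (Fin n → Fin k),
      List.Pairwise (fun a b => σ.symm a < σ.symm b) L →
      (∀ w ∈ V, ∀ j, j ∉ L → (w j : ℕ) = 0) →
      stdMon lin (vanishIdeal ((V.image (toField ℚ) : Finset (Fin n → ℚ)) :
          Set (Fin n → ℚ)))
        = toExp '' ((L.foldl downshift V : Finset (Fin n → Fin k)) :
            Set (Fin n → Fin k)) := by
  classical
  induction L with
  | nil =>
      intro V _ hV
      rw [List.foldl_nil]
      ext m
      rw [stdMon, Set.mem_setOf_eq]
      rcases Finset.eq_empty_or_nonempty V with rfl | hne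
      · constructor
        · intro hstd
          exfalso
          apply hstd
          refine ⟨monomial m 1, ?_, ?_, ?_, ?_⟩
          · rw [mem_vanishIdeal_image]
            intro w hw
            exact absurd hw (Finset.notMem_empty w)
          · rw [Ne, MvPolynomial.monomial_eq_zero]
            exact one_ne_zero
          · rw [mem_support_iff, coeff_monomial, if_pos rfl]
            exact one_ne_zero
          · intro u hu
            have hmu : m = u := by
              by_contra hne
              exact (mem_support_iff.mp hu) (by rw [coeff_monomial, if_neg hne])
            rw [← hmu]
            exact lin.le_refl m
        · intro hmem
          exfalso
          simp at hmem
      · obtain ⟨w₀, hw₀⟩ := hne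
        have hall : ∀ w ∈ V, w = w₀ := by
          intro w hw
          funext j
          apply Fin.ext
          rw [hV w hw j List.not_mem_nil, hV w₀ hw₀ j List.not_mem_nil]
        have hexp0 : toExp w₀ = 0 := by
          ext j
          rw [toExp_apply, hV w₀ hw₀ j List.not_mem_nil]
          rfl
        constructor
        · intro hstd
          rcases eq_or_ne m 0 with rfl | hm0
          · exact ⟨w₀, Finset.mem_coe.mpr hw₀, hexp0⟩
          · exfalso
            apply hstd
            obtain ⟨j, hj⟩ : ∃ j, m j ≠ 0 := by
              by_contra hc
              push_neg at hc
              exact hm0 (Finsupp.ext hc)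
            exact not_std_of_zerocoord hj (fun w hw => hV w hw j List.not_mem_nil)
        · rintro ⟨w, hw, rfl⟩
          have hw0 : w = w₀ := hall w (Finset.mem_coe.mp hw)
          rintro ⟨f, hfI, hf0, hflm⟩
          have hexp : toExp w = 0 := by rw [hw0]; exact hexp0
          have hsupp0 : ∀ u ∈ f.support, u = 0 := by
            intro u hu
            have h1 := hflm.2 u hu
            rw [hexp] at h1
            exact lin.le_antisymm _ _ h1 (hlin.zero_le u)
          have hfC : f = C (coeff 0 f) := by
            apply MvPolynomial.ext
            intro u
            rw [coeff_C]
            split_ifs with h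
            · rw [← h]
            · by_contra hc
              exact h ((hsupp0 u (mem_support_iff.mpr fun h0 => hc (by rw [h0]))).symm)
          have hvan := mem_vanishIdeal_image.mp hfI w (Finset.mem_coe.mp hw)
          apply hf0
          rw [hfC] at hvan ⊢
          rw [eval_C] at hvan
          rw [hvan, map_zero]
  | cons i L IH =>
      intro V hpair hV
      have hsort : ∀ l ∈ L, σ.symm i < σ.symm l := (List.pairwise_cons.mp hpair).1
      have hpair' := (List.pairwise_cons.mp hpair).2
      have hiL : i ∉ L := fun h => lt_irrefl _ (hsort i h)
      ext m
      rw [stdMon, Set.mem_setOf_eq]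
      by_cases hmsupp : ∀ j, j ∉ i :: L → m j = 0
      · have hIH := IH (layerW i V (m i)) hpair' (layerW_zero_outside hV (m i))
        have hglue := glue_toExp hiL V m
        constructor
        · intro hstd
          apply hglue.mpr
          rw [← hIH]
          simp only [stdMon, Set.mem_setOf_eq]
          intro hg
          exact hstd (step2 hlin hsort hiL hV hmsupp hg)
        · intro hmem hf
          have hg := step1 hlin hsort hV hmsupp hf
          have hmem2 : m.erase i ∈ stdMon lin (vanishIdeal
              (((layerW i V (m i)).image (toField ℚ) : Finset (Fin n → ℚ)) :
                Set (Fin n → ℚ))) := by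
            rw [hIH]
            exact hglue.mp hmem
          exact hmem2 hg
      · push_neg at hmsupp
        obtain ⟨j, hjL, hj⟩ := hmsupp
        have hw0 : ∀ w ∈ V, (w j : ℕ) = 0 := fun w hw => hV w hw j hjL
        constructor
        · intro hstd
          exact absurd (not_std_of_zerocoord hj hw0) hstd
        · intro hmem
          exfalso
          obtain ⟨w, hw, rfl⟩ := hmem
          have hwj : (w j : ℕ) = 0 := by
            refine foldl_downshift_pres (i :: L) (fun w => (w j : ℕ) = 0) ?_ hw0 w
              (Finset.mem_coe.mp hw)
            intro l hl w' α
            have hlj : l ≠ j := fun h => hjL (h ▸ hl)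
            show ((Function.update w' l α) j : ℕ) = 0 ↔ (w' j : ℕ) = 0
            rw [Function.update_apply, if_neg (fun h : j = l => hlj h.symm)]
          apply hj
          rw [toExp_apply]
          exact hwj

end Main

/-- Corollary `downshiftcor`.
A finite point set `𝒱 ⊆ {0,…,k-1}^n` is extremal if and only if the iterated downshift
`D_{π(n),π(n-1),…,π(1)}(𝒱)` is the same for every permutation `π` of `[n]`. -/
theorem extremal_iff_iterated_downshift_invariant {n k : ℕ}
    (V : Finset (Fin n → Fin k)) :
    IsExtremal ((V.image (toField ℚ) : Finset (Fin n → ℚ)) : Set (Fin n → ℚ)) ↔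
      ∀ σ₁ σ₂ : Equiv.Perm (Fin n), iterDownshift σ₁ V = iterDownshift σ₂ V := by
  classical
  have hmain : ∀ (σ' : Equiv.Perm (Fin n)) (lin' : LinearOrder (Mon n)),
      IsLexOrder σ' lin' →
      stdMon lin' (vanishIdeal ((V.image (toField ℚ) : Finset (Fin n → ℚ)) :
          Set (Fin n → ℚ)))
        = toExp '' ((iterDownshift σ' V : Finset (Fin n → Fin k)) :
            Set (Fin n → Fin k)) := by
    intro σ' lin' h
    have hpar : List.Pairwise (fun a b => σ'.symm a < σ'.symm b)
        (List.ofFn fun j : Fin n => σ' j) := by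
      rw [List.pairwise_ofFn]
      intro a b hab
      simpa using hab
    have hzero : ∀ w ∈ V, ∀ j : Fin n, j ∉ (List.ofFn fun j : Fin n => σ' j) →
        (w j : ℕ) = 0 := by
      intro w _ j hj
      exfalso
      apply hj
      rw [List.mem_ofFn]
      exact ⟨σ'.symm j, by simp⟩
    exact mainL σ' lin' h (List.ofFn fun j : Fin n => σ' j) V hpar hzero
  constructor
  · intro hext σ₁ σ₂
    have h3 := hext σ₁ σ₂ (lexLO σ₁) (lexLO σ₂) (isLexOrder_lexLO σ₁) (isLexOrder_lexLO σ₂)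
    rw [hmain σ₁ (lexLO σ₁) (isLexOrder_lexLO σ₁),
      hmain σ₂ (lexLO σ₂) (isLexOrder_lexLO σ₂)] at h3
    apply Finset.coe_injective
    exact Set.image_injective.mpr toExp_injective h3
  · intro hinv σ₁ σ₂ lin₁ lin₂ h₁ h₂
    rw [hmain σ₁ lin₁ h₁, hmain σ₂ lin₂ h₂, hinv σ₁ σ₂]
end

section
/- Let 𝒱 ⊆ {0,1,…,k−1}^n ⊆ ℝ^n be a finite point set. If for some single term order ≺ the vanishing ideal I(𝒱) ⊴ ℝ[x_1,…,x_n] has a Gröbner basis with respect to ≺ consisting of degree dominated polynomials, then 𝒱 is extremal. -/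
open MvPolynomial

section AuxProof

open MvPolynomial

variable {n : ℕ}

private lemma aux_isTermOrder_of_isLexOrder {σ : Equiv.Perm (Fin n)}
    {lin : LinearOrder (Mon n)} (h : IsLexOrder σ lin) : IsTermOrder lin := by
  constructor
  · intro u
    rcases eq_or_ne (0 : Mon n) u with rfl | hne
    · exact lin.le_refl _
    · refine @le_of_lt _ lin.toPreorder _ _ ?_
      rw [h]
      classical
      have hex : (Finset.univ.filter fun j : Fin n => u (σ j) ≠ 0).Nonempty := by
        by_contra hcon
        rw [Finset.not_nonempty_iff_eq_empty, Finset.filter_eq_empty_iff] at hcon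
        apply hne
        ext i
        have := hcon (Finset.mem_univ (σ.symm i))
        simp only [Equiv.apply_symm_apply, not_not] at this
        simp [this]
      refine ⟨(Finset.univ.filter fun j : Fin n => u (σ j) ≠ 0).min' hex, ?_, ?_⟩
      · have hmem := (Finset.univ.filter fun j : Fin n => u (σ j) ≠ 0).min'_mem hex
        rw [Finset.mem_filter] at hmem
        simp only [Finsupp.coe_zero, Pi.zero_apply]
        exact Nat.pos_of_ne_zero hmem.2
      · intro i hi
        by_contra hne2
        have hmem : i ∈ Finset.univ.filter fun j : Fin n => u (σ j) ≠ 0 :=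
          Finset.mem_filter.mpr ⟨Finset.mem_univ i, fun hz => hne2 (by simp [hz])⟩
        exact absurd (Finset.min'_le _ i hmem) (not_le.mpr hi)
  · intro u v w huv
    rcases eq_or_ne u v with rfl | hne
    · exact lin.le_refl _
    · have hlt : lin.lt u v := by
        rcases (lin.lt_iff_le_not_ge u v).symm.mp ⟨huv, fun hvu => hne (lin.le_antisymm _ _ huv hvu)⟩ with h'
        exact h'
      rw [h] at hlt
      obtain ⟨j, hj, hpre⟩ := hlt
      refine @le_of_lt _ lin.toPreorder _ _ ?_
      rw [h]
      exact ⟨j, by simp only [Finsupp.add_apply]; exact Nat.add_lt_add_right hj _,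
        fun i hi => by simp only [Finsupp.add_apply, hpre i hi]⟩

private lemma aux_le_of_dvd_le {lin : LinearOrder (Mon n)} (hlin : IsTermOrder lin)
    {u v : Mon n} (h : u ≤ v) : lin.le u v := by
  obtain ⟨c, rfl⟩ := le_iff_exists_add.mp h
  have := hlin.2 0 c u (hlin.1 c)
  simpa [add_comm] using this

private lemma aux_leadMon_unique {lin : LinearOrder (Mon n)}
    {f : MvPolynomial (Fin n) ℝ} {m m' : Mon n}
    (h : IsLeadMon lin f m) (h' : IsLeadMon lin f m') : m = m' :=
  lin.le_antisymm _ _ (h'.2 m h.1) (h.2 m' h'.1)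

/-- term of a representation tuple `(c, u, w, g)` : `g * X^u * c`. -/
private noncomputable def repTerm (t : ℝ × Mon n × Mon n × MvPolynomial (Fin n) ℝ) :
    MvPolynomial (Fin n) ℝ := t.2.2.2 * monomial t.2.1 t.1

/-- master monomial of a representation tuple `(c, u, w, g)` : `u + w`. -/
private noncomputable def repMaster (t : ℝ × Mon n × Mon n × MvPolynomial (Fin n) ℝ) : Mon n :=
  t.2.1 + t.2.2.1

private def GoodTuple (G : Finset (MvPolynomial (Fin n) ℝ))
    (t : ℝ × Mon n × Mon n × MvPolynomial (Fin n) ℝ) : Prop :=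
  t.1 ≠ 0 ∧ t.2.2.2 ∈ G ∧ MvPolynomial.coeff t.2.2.1 t.2.2.2 = 1 ∧
    ∀ v ∈ t.2.2.2.support, v ≤ t.2.2.1

private def GoodRep (lin : LinearOrder (Mon n)) (G : Finset (MvPolynomial (Fin n) ℝ))
    (f : MvPolynomial (Fin n) ℝ) (L : List (ℝ × Mon n × Mon n × MvPolynomial (Fin n) ℝ)) :
    Prop :=
  f = (L.map repTerm).sum ∧ (∀ t ∈ L, GoodTuple G t) ∧
    (L.map repMaster).Chain' (fun a b => lin.lt b a)

private lemma aux_support_repTerm {t : ℝ × Mon n × Mon n × MvPolynomial (Fin n) ℝ}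
    (hdom : ∀ v ∈ t.2.2.2.support, v ≤ t.2.2.1) :
    ∀ v ∈ (repTerm t).support, v ≤ repMaster t := by
  intro v hv
  rw [MvPolynomial.mem_support_iff, repTerm, MvPolynomial.coeff_mul_monomial'] at hv
  by_cases hle : t.2.1 ≤ v
  · rw [if_pos hle] at hv
    have h1 : v - t.2.1 ∈ t.2.2.2.support := by
      rw [MvPolynomial.mem_support_iff]
      intro hz
      exact hv (by rw [hz, zero_mul])
    have h2 := hdom _ h1
    rw [repMaster]
    calc v = t.2.1 + (v - t.2.1) := (add_tsub_cancel_of_le hle).symm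
    _ ≤ t.2.1 + t.2.2.1 := add_le_add le_rfl h2
  · rw [if_neg hle] at hv
    exact absurd rfl hv

private lemma aux_coeff_repTerm_master {t : ℝ × Mon n × Mon n × MvPolynomial (Fin n) ℝ}
    (h1 : MvPolynomial.coeff t.2.2.1 t.2.2.2 = 1) :
    MvPolynomial.coeff (repMaster t) (repTerm t) = t.1 := by
  rw [repTerm, repMaster, MvPolynomial.coeff_mul_monomial', if_pos le_self_add,
    add_tsub_cancel_left, h1, one_mul]

private lemma aux_coeff_listSum (L : List (ℝ × Mon n × Mon n × MvPolynomial (Fin n) ℝ))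
    (m : Mon n) :
    MvPolynomial.coeff m (L.map repTerm).sum
      = (L.map fun t => MvPolynomial.coeff m (repTerm t)).sum := by
  have := map_list_sum (MvPolynomial.lcoeff ℝ m) (L.map repTerm)
  simpa [List.map_map, Function.comp_def] using this

open scoped Classical in
/-- The main reduction lemma. -/
private lemma aux_exists_goodRep {lin : LinearOrder (Mon n)} (hlin : IsTermOrder lin)
    {G : Finset (MvPolynomial (Fin n) ℝ)} (hG : ∀ g ∈ G, IsDegDominated g)
    {I : Ideal (MvPolynomial (Fin n) ℝ)} (hGB : IsGroebner lin G I) :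
    ∀ N : ℕ, ∀ f ∈ I, ∀ m : Mon n, IsLeadMon lin f m →
      ∀ D : Finset (Mon n), (∀ s ∈ f.support, ∀ v ≤ s, v ∈ D) →
      (D.filter fun v => lin.le v m).card ≤ N →
      ∃ L, GoodRep lin G f L ∧ (L.map repMaster).head? = some m := by
  intro N
  induction N using Nat.strong_induction_on with
  | _ N ih =>
  intro f hf m hm D hD hcard
  have hf0 : f ≠ 0 := by
    intro hz
    have := hm.1
    rw [hz] at this
    simp at this
  obtain ⟨g, hgG, mg, hmg, hmgle⟩ := hGB.2 f hf hf0 m hm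
  obtain ⟨w, hw1, hwdom⟩ := hG g hgG
  have hwsupp : w ∈ g.support := by
    rw [MvPolynomial.mem_support_iff, hw1]; exact one_ne_zero
  have hgw : mg = w :=
    lin.le_antisymm _ _ (aux_le_of_dvd_le hlin (hwdom mg hmg.1)) (hmg.2 w hwsupp)
  have hwm : w ≤ m := hgw ▸ hmgle
  set c := MvPolynomial.coeff m f with hc
  have hc0 : c ≠ 0 := MvPolynomial.mem_support_iff.mp hm.1
  set t : ℝ × Mon n × Mon n × MvPolynomial (Fin n) ℝ := (c, m - w, w, g) with ht
  have hmaster : repMaster t = m := by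
    rw [repMaster]; exact tsub_add_cancel_of_le hwm
  have hgood : GoodTuple G t := ⟨hc0, hgG, hw1, hwdom⟩
  have hqsupp : ∀ v ∈ (repTerm t).support, v ≤ m := by
    rw [← hmaster]; exact aux_support_repTerm hwdom
  have hqcoeff : MvPolynomial.coeff m (repTerm t) = c := by
    rw [← hmaster]; exact aux_coeff_repTerm_master hw1
  have hqI : repTerm t ∈ I := I.mul_mem_right _ (hGB.1 g hgG)
  set f₁ := f - repTerm t with hf₁
  have hf₁I : f₁ ∈ I := I.sub_mem hf hqI
  have hf₁m : MvPolynomial.coeff m f₁ = 0 := by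
    rw [hf₁, MvPolynomial.coeff_sub, hqcoeff, ← hc, sub_self]
  have hfsum : f = repTerm t + f₁ := by rw [hf₁]; ring
  have hf₁supp : ∀ v ∈ f₁.support, lin.lt v m := by
    intro v hv
    have hvm : v ≠ m := fun h => by
      rw [h, MvPolynomial.mem_support_iff] at hv; exact hv hf₁m
    have hvle : lin.le v m := by
      have := MvPolynomial.support_sub _ f (repTerm t) hv
      rcases Finset.mem_union.mp this with h' | h'
      · exact hm.2 v h'
      · exact aux_le_of_dvd_le hlin (hqsupp v h')
    exact (lin.lt_iff_le_not_ge v m).mpr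
      ⟨hvle, fun h => hvm (lin.le_antisymm _ _ hvle h)⟩
  have hDf₁ : ∀ s ∈ f₁.support, ∀ v ≤ s, v ∈ D := by
    intro s hs v hv
    rcases Finset.mem_union.mp (MvPolynomial.support_sub _ f (repTerm t) hs) with h' | h'
    · exact hD s h' v hv
    · exact hD m hm.1 v (le_trans hv (hqsupp s h'))
  by_cases hf₁0 : f₁ = 0
  · refine ⟨[t], ⟨?_, ?_, ?_⟩, ?_⟩
    · rw [hfsum, hf₁0]; simp
    · intro t' ht'
      rw [List.mem_singleton] at ht'
      rw [ht']; exact hgood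
    · exact List.isChain_singleton _
    · simp [hmaster]
  · obtain ⟨m₁, hm₁s, hm₁max⟩ :=
      @Finset.exists_max_image (Mon n) (Mon n) lin f₁.support id
        (MvPolynomial.support_nonempty.mpr hf₁0)
    have hm₁lead : IsLeadMon lin f₁ m₁ := ⟨hm₁s, fun v hv => hm₁max v hv⟩
    have hm₁lt : lin.lt m₁ m := hf₁supp m₁ hm₁s
    have hsubset : (D.filter fun v => lin.le v m₁) ⊂ (D.filter fun v => lin.le v m) := by
      constructor
      · intro v hv
        rw [Finset.mem_filter] at hv ⊢
        exact ⟨hv.1, lin.le_trans _ _ _ hv.2 ((lin.lt_iff_le_not_ge m₁ m).mp hm₁lt).1⟩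
      · intro hcon
        have hmmem : m ∈ D.filter fun v => lin.le v m :=
          Finset.mem_filter.mpr ⟨hD m hm.1 m le_rfl, lin.le_refl m⟩
        have := Finset.mem_filter.mp (hcon hmmem)
        exact ((lin.lt_iff_le_not_ge m₁ m).mp hm₁lt).2 this.2
    have hcard₁ : (D.filter fun v => lin.le v m₁).card < N :=
      lt_of_lt_of_le (Finset.card_lt_card hsubset) hcard
    obtain ⟨L₁, ⟨hsum₁, hprops₁, hchain₁⟩, hhead₁⟩ :=
      ih _ hcard₁ f₁ hf₁I m₁ hm₁lead D hDf₁ le_rfl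
    refine ⟨t :: L₁, ⟨?_, ?_, ?_⟩, ?_⟩
    · rw [hfsum, hsum₁]; simp
    · intro t' ht'
      rcases List.mem_cons.mp ht' with h' | h'
      · rw [h']; exact hgood
      · exact hprops₁ t' h'
    · rw [List.map_cons]
      simp only [List.Chain']; rw [List.isChain_cons]
      refine ⟨?_, hchain₁⟩
      intro b hb
      rw [hhead₁, Option.mem_some_iff] at hb
      rw [← hb, hmaster]
      exact hm₁lt
    · simp [hmaster]

/-- Structure of the leading monomial of any nonzero `f ∈ I`, for any term order. -/
private lemma aux_leadMon_structure {lin : LinearOrder (Mon n)} (hlin : IsTermOrder lin)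
    {G : Finset (MvPolynomial (Fin n) ℝ)} (hG : ∀ g ∈ G, IsDegDominated g)
    {I : Ideal (MvPolynomial (Fin n) ℝ)} (hGB : IsGroebner lin G I)
    {f : MvPolynomial (Fin n) ℝ} (hf : f ∈ I) (hf0 : f ≠ 0)
    (lin' : LinearOrder (Mon n)) (hlin' : IsTermOrder lin') :
    ∃ m : Mon n, IsLeadMon lin' f m ∧
      ∃ g ∈ G, ∃ w : Mon n, MvPolynomial.coeff w g = 1 ∧
        (∀ v ∈ g.support, v ≤ w) ∧ w ≤ m := by
  classical
  obtain ⟨m₀, hm₀s, hm₀max⟩ :=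
    @Finset.exists_max_image (Mon n) (Mon n) lin f.support id
      (MvPolynomial.support_nonempty.mpr hf0)
  have hm₀lead : IsLeadMon lin f m₀ := ⟨hm₀s, fun v hv => hm₀max v hv⟩
  obtain ⟨L, ⟨hsum, hprops, hchain⟩, hhead⟩ :=
    aux_exists_goodRep hlin hG hGB _ f hf m₀ hm₀lead
      (f.support.biUnion fun s => Finset.Iic s)
      (fun s hs v hv => Finset.mem_biUnion.mpr ⟨s, hs, Finset.mem_Iic.mpr hv⟩) le_rfl
  have hL0 : L ≠ [] := by
    intro hz
    rw [hz] at hhead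
    simp at hhead
  -- masters are pairwise distinct
  have hnodupM : (L.map repMaster).Nodup := by
    haveI : IsTrans (Mon n) (fun a b : Mon n => lin.lt b a) :=
      ⟨fun a b c h1 h2 => @lt_trans _ lin.toPreorder _ _ _ h2 h1⟩
    have hpw := List.isChain_iff_pairwise.mp hchain
    refine hpw.imp ?_
    intro a b h hab
    subst hab
    exact ((lin.lt_iff_le_not_ge a a).mp h).2 (lin.le_refl a)
  have hnodup : L.Nodup := List.Nodup.of_map repMaster hnodupM
  have hsumF : f = ∑ t ∈ L.toFinset, repTerm t := by
    rw [hsum, List.sum_toFinset _ hnodup]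
  obtain ⟨tmax, htmaxS, htmaxmax⟩ :=
    @Finset.exists_max_image (Mon n) _ lin' L.toFinset repMaster
      (by rwa [List.toFinset_nonempty_iff])
  set M := repMaster tmax with hM
  have htmaxL : tmax ∈ L := List.mem_toFinset.mp htmaxS
  have hgoodmax := hprops tmax htmaxL
  -- every support monomial of f is lin'-below M
  have hsuppf : ∀ v ∈ f.support, lin'.le v M := by
    intro v hv
    rw [MvPolynomial.mem_support_iff, hsumF, MvPolynomial.coeff_sum] at hv
    obtain ⟨t', ht'S, ht'ne⟩ : ∃ t' ∈ L.toFinset, MvPolynomial.coeff v (repTerm t') ≠ 0 := by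
      by_contra hcon
      push_neg at hcon
      exact hv (Finset.sum_eq_zero hcon)
    have hle : v ≤ repMaster t' :=
      aux_support_repTerm (hprops t' (List.mem_toFinset.mp ht'S)).2.2.2 v
        (MvPolynomial.mem_support_iff.mpr ht'ne)
    exact lin'.le_trans _ _ _ (aux_le_of_dvd_le hlin' hle) (htmaxmax t' ht'S)
  -- coefficient of M in f is nonzero
  have hcoeffM : MvPolynomial.coeff M f = tmax.1 := by
    rw [hsumF, MvPolynomial.coeff_sum]
    rw [Finset.sum_eq_single tmax]
    · exact aux_coeff_repTerm_master hgoodmax.2.2.1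
    · intro t' ht'S ht'ne
      by_contra hne
      have hMle : M ≤ repMaster t' :=
        aux_support_repTerm (hprops t' (List.mem_toFinset.mp ht'S)).2.2.2 M
          (MvPolynomial.mem_support_iff.mpr hne)
      have hMeq : repMaster t' = M :=
        lin'.le_antisymm _ _ (htmaxmax t' ht'S) (aux_le_of_dvd_le hlin' hMle)
      exact ht'ne (List.inj_on_of_nodup_map hnodupM
        (List.mem_toFinset.mp ht'S) htmaxL hMeq)
    · intro h; exact absurd htmaxS h
  have hlead : IsLeadMon lin' f M :=
    ⟨MvPolynomial.mem_support_iff.mpr (hcoeffM ▸ hgoodmax.1), hsuppf⟩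
  exact ⟨M, hlead, tmax.2.2.2, hgoodmax.2.1, tmax.2.2.1, hgoodmax.2.2.1,
    hgoodmax.2.2.2, le_add_self⟩

/-- Standard monomials w.r.t. any term order form the same, order-independent set. -/
private lemma aux_stdMon_eq {lin : LinearOrder (Mon n)} (hlin : IsTermOrder lin)
    {G : Finset (MvPolynomial (Fin n) ℝ)} (hG : ∀ g ∈ G, IsDegDominated g)
    {I : Ideal (MvPolynomial (Fin n) ℝ)} (hGB : IsGroebner lin G I)
    (lin' : LinearOrder (Mon n)) (hlin' : IsTermOrder lin') :
    stdMon lin' I = { m : Mon n | ¬ ∃ g ∈ G, ∃ w : Mon n,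
      MvPolynomial.coeff w g = 1 ∧ (∀ v ∈ g.support, v ≤ w) ∧ w ≤ m } := by
  ext m
  simp only [stdMon, Set.mem_setOf_eq]
  constructor
  · intro hstd
    intro ⟨g, hgG, w, hw1, hwdom, hwm⟩
    apply hstd
    set t : ℝ × Mon n × Mon n × MvPolynomial (Fin n) ℝ := ((1 : ℝ), m - w, w, g) with ht
    have hmaster : repMaster t = m := by
      rw [repMaster]; exact tsub_add_cancel_of_le hwm
    refine ⟨repTerm t, I.mul_mem_right _ (hGB.1 g hgG), ?_, ?_, ?_⟩
    · intro hz
      have := aux_coeff_repTerm_master (t := t) hw1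
      rw [hz] at this
      simp [ht] at this
    · rw [MvPolynomial.mem_support_iff, ← hmaster, aux_coeff_repTerm_master (t := t) hw1]
      exact one_ne_zero
    · intro v hv
      have := aux_support_repTerm (t := t) hwdom v hv
      rw [hmaster] at this
      exact aux_le_of_dvd_le hlin' this
  · intro hC ⟨f, hf, hf0, hlead⟩
    obtain ⟨M, hMlead, g, hgG, w, hw1, hwdom, hwM⟩ :=
      aux_leadMon_structure hlin hG hGB hf hf0 lin' hlin'
    exact hC ⟨g, hgG, w, hw1, hwdom, aux_leadMon_unique hlead hMlead ▸ hwM⟩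

end AuxProof


/-- If for a single term order `≺` the vanishing ideal `I(𝒱) ⊴ ℝ[x]` of a finite point set
`𝒱 ⊆ {0,…,k-1}^n` has a Gröbner basis consisting of degree dominated polynomials, then
`𝒱` is extremal. -/
theorem extremal_of_degDominated_groebner_single_order {n k : ℕ}
    (V : Finset (Fin n → Fin k))
    (lin : LinearOrder (Mon n)) (hlin : IsTermOrder lin)
    (G : Finset (MvPolynomial (Fin n) ℝ))
    (hG : ∀ g ∈ G, IsDegDominated g)
    (hGB : IsGroebner lin G
      (vanishIdeal ((V.image (toField ℝ) : Finset (Fin n → ℝ)) : Set (Fin n → ℝ)))) :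
    IsExtremal ((V.image (toField ℝ) : Finset (Fin n → ℝ)) : Set (Fin n → ℝ)) := by
  intro σ₁ σ₂ lin₁ lin₂ h₁ h₂
  rw [aux_stdMon_eq hlin hG hGB lin₁ (aux_isTermOrder_of_isLexOrder h₁),
      aux_stdMon_eq hlin hG hGB lin₂ (aux_isTermOrder_of_isLexOrder h₂)]
end
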